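/- If G is a graph of order n ≥ 3 with σ(G) ≥ n, then G is Hamiltonian (Ore's theorem). -/

import Mathlib

open Finset SimpleGraph

set_option linter.unusedSectionVars false
set_option linter.unusedVariables false

section OreAux

variable {V : Type} [Fintype V] [DecidableEq V]

def OreHamList (G : SimpleGraph V) (c : List V) : Prop :=
  c.Nodup ∧ (∀ x : V, x ∈ c) ∧ c.Chain' G.Adj ∧
    ∀ x ∈ c.getLast?, ∀ y ∈ c.head?, G.Adj x y

def oreMkWalk (G : SimpleGraph V) : (a b : V) → (l : List V) →
    List.Chain G.Adj a (l ++ [b]) → G.Walk a b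
  | a, b, [], h => SimpleGraph.Walk.cons (by simpa [List.Chain] using h) SimpleGraph.Walk.nil
  | a, b, x :: l, h =>
      SimpleGraph.Walk.cons (List.chain_cons.mp h).1
        (oreMkWalk G x b l (List.chain_cons.mp h).2)

lemma oreMkWalk_support (G : SimpleGraph V) : ∀ (a b : V) (l : List V)
    (h : List.Chain G.Adj a (l ++ [b])), (oreMkWalk G a b l h).support = a :: (l ++ [b])
  | a, b, [], h => by simp [oreMkWalk]
  | a, b, x :: l, h => by simp [oreMkWalk]; exact oreMkWalk_support G x b l _

lemma ore_full_length {p : List V} (hnd : p.Nodup) (hmem : ∀ x : V, x ∈ p) :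
    p.length = Fintype.card V := by
  rw [← List.toFinset_card_of_nodup hnd, ← Finset.card_univ]
  congr 1
  ext x
  simp [hmem]

lemma ore_getElem?_inj {p : List V} (hnd : p.Nodup) {i j : ℕ} {w : V}
    (h1 : p[i]? = some w) (h2 : p[j]? = some w) : i = j := by
  obtain ⟨hi, e1⟩ := List.getElem?_eq_some_iff.mp h1
  obtain ⟨hj, e2⟩ := List.getElem?_eq_some_iff.mp h2
  exact hnd.getElem_inj_iff.mp (e1.trans e2.symm)

lemma ore_lt_of_getElem? {p : List V} {i : ℕ} {w : V} (h : p[i]? = some w) :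
    i < p.length :=
  (List.getElem?_eq_some_iff.mp h).1

lemma ore_chain'_iff {R : V → V → Prop} {l : List V} :
    l.Chain' R ↔ ∀ (i : ℕ) (x y : V), l[i]? = some x → l[i+1]? = some y → R x y := by
  rw [List.Chain', List.isChain_iff_getElem]
  constructor
  · intro h i x y hx hy
    obtain ⟨h1, e1⟩ := List.getElem?_eq_some_iff.mp hx
    obtain ⟨h2, e2⟩ := List.getElem?_eq_some_iff.mp hy
    have hr := h i (by omega)
    rwa [e1, e2] at hr
  · intro h i hi
    exact h i _ _ (List.getElem?_eq_getElem (by omega)) (List.getElem?_eq_getElem (by omega))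

lemma ore_loop_support {G : SimpleGraph V} {w : V} (q : G.Walk w w)
    (hnd : q.support.Nodup) : q.support = [w] := by
  cases q with
  | nil => simp
  | cons h' q' =>
    exfalso
    simp only [SimpleGraph.Walk.support_cons, List.nodup_cons] at hnd
    exact hnd.1 q'.end_mem_support

lemma ore_not_mem_edges (G : SimpleGraph V) : ∀ {x a : V} (q : G.Walk x a),
    q.support.Nodup → 2 < q.support.length → s(a, x) ∉ q.edges := by
  intro x a q
  induction q with
  | nil => simp
  | @cons u y w h q ih =>
    intro hnd hlen hmem
    simp only [SimpleGraph.Walk.edges_cons, List.mem_cons] at hmem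
    simp only [SimpleGraph.Walk.support_cons, List.nodup_cons] at hnd
    rcases hmem with he | he
    · have hau : w ≠ u := by
        rintro rfl
        exact hnd.1 q.end_mem_support
      have hyw : y = w := by
        rw [Sym2.eq_iff] at he
        rcases he with ⟨h1, h2⟩ | ⟨h1, h2⟩
        · exact absurd h1 hau
        · exact h1.symm
      subst hyw
      have hq := ore_loop_support q hnd.2
      rw [SimpleGraph.Walk.support_cons, hq] at hlen
      simp at hlen
    · exact hnd.1 (q.snd_mem_support_of_mem_edges he)

lemma oreHamList_length {G : SimpleGraph V} {c : List V} (hc : OreHamList G c) :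
    c.length = Fintype.card V := by
  obtain ⟨hnd, hmem, -, -⟩ := hc
  rw [← List.toFinset_card_of_nodup hnd, ← Finset.card_univ]
  congr 1
  ext x
  simp [hmem]

lemma oreHamList_isHamiltonian {G : SimpleGraph V} {c : List V}
    (hn : 3 ≤ Fintype.card V) (hc : OreHamList G c) : G.IsHamiltonian := by
  obtain ⟨hnd, hmem, hch, hwrap⟩ := hc
  have hlen : c.length = Fintype.card V := oreHamList_length ⟨hnd, hmem, hch, hwrap⟩
  intro _
  obtain ⟨a, t, rfl⟩ : ∃ a t, c = a :: t := by
    cases c with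
    | nil => rw [← hlen] at hn; simp at hn
    | cons a t => exact ⟨a, t, rfl⟩
  have hchain : List.Chain G.Adj a (t ++ [a]) := by
    have h2 : List.Chain' G.Adj ((a :: t) ++ [a]) := by
      rw [List.Chain', List.isChain_append]
      refine ⟨hch, List.isChain_singleton a, ?_⟩
      intro x hx y hy
      simp only [List.head?_cons, Option.mem_some_iff] at hy
      subst hy
      exact hwrap x hx a (by simp)
    rw [List.cons_append] at h2
    exact h2
  obtain ⟨x, t', rfl⟩ : ∃ x t', t = x :: t' := by
    cases t with
    | nil => simp at hlen; omega
    | cons x t' => exact ⟨x, t', rfl⟩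
  have hq := (List.chain_cons.mp hchain).2
  set q : G.Walk x a := oreMkWalk G x a t' hq with hqdef
  have hqsupp : q.support = x :: (t' ++ [a]) := oreMkWalk_support G x a t' hq
  have hperm : (x :: (t' ++ [a])).Perm (a :: x :: t') := by
    simpa using List.perm_append_singleton a (x :: t')
  have hqnd : q.support.Nodup := by rw [hqsupp]; exact hperm.nodup_iff.mpr hnd
  have hpath : q.IsPath := SimpleGraph.Walk.IsPath.mk' hqnd
  have hlen' : 2 < q.support.length := by
    rw [hqsupp]
    simp only [List.length_cons, List.length_append, List.length_singleton]
    simp only [List.length_cons] at hlen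
    omega
  have hnotmem : s(a, x) ∉ q.edges := ore_not_mem_edges G q hqnd hlen'
  refine ⟨a, SimpleGraph.Walk.cons (List.chain_cons.mp hchain).1 q, ?_⟩
  rw [SimpleGraph.Walk.isHamiltonianCycle_iff_isCycle_and_support_count_tail_eq_one]
  constructor
  · exact (SimpleGraph.Walk.cons_isCycle_iff q _).mpr ⟨hpath, hnotmem⟩
  · intro b
    have hmem' : b ∈ x :: (t' ++ [a]) := hperm.mem_iff.mpr (hmem b)
    have hnd' : (x :: (t' ++ [a])).Nodup := hperm.nodup_iff.mpr hnd
    rw [SimpleGraph.Walk.support_cons, List.tail_cons, hqsupp]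
    exact List.count_eq_one_of_mem hnd' hmem'

lemma ore_rotation {G : SimpleGraph V} [DecidableRel G.Adj] {u v : V}
    (huv : u ≠ v) (hna : ¬ G.Adj u v)
    (hdeg : Fintype.card V ≤ G.degree u + G.degree v)
    (hn : 3 ≤ Fintype.card V)
    (p : List V) (hnd : p.Nodup) (hmem : ∀ x : V, x ∈ p) (hch : p.Chain' G.Adj)
    (hh : p.head? = some u) (hl : p.getLast? = some v) :
    ∃ c, OreHamList G c := by
  classical
  have hlen : p.length = Fintype.card V := ore_full_length hnd hmem
  set n := p.length with hndef
  have hn3 : 3 ≤ n := by omega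
  have hgeq : ∀ w : V, p.idxOf w < n := fun w => List.idxOf_lt_length_iff.mpr (hmem w)
  have hidx? : ∀ w : V, p[p.idxOf w]? = some w := by
    intro w
    rw [List.getElem?_eq_getElem (hgeq w)]
    exact congrArg some (List.getElem_idxOf (hgeq w))
  have hinj : ∀ {i j : ℕ} {w : V}, p[i]? = some w → p[j]? = some w → i = j := by
    intro i j w h1 h2
    have hi : i < n := by
      by_contra hc
      rw [List.getElem?_eq_none (by omega)] at h1
      exact absurd h1 (by simp)
    have hj : j < n := by
      by_contra hc
      rw [List.getElem?_eq_none (by omega)] at h2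
      exact absurd h2 (by simp)
    rw [List.getElem?_eq_getElem hi] at h1
    rw [List.getElem?_eq_getElem hj] at h2
    exact (hnd.getElem_inj_iff).mp (by rw [Option.some_inj.mp h1, Option.some_inj.mp h2])
  have hu0 : p[0]? = some u := by rw [← List.head?_eq_getElem?]; exact hh
  have hv1 : p[n-1]? = some v := by rw [← List.getLast?_eq_getElem?]; exact hl
  -- neighbors of u have nonzero index; neighbors of u and v avoid index n-1
  have hnz : ∀ w : V, G.Adj u w → p.idxOf w ≠ 0 := by
    intro w hw h0
    have h := hidx? w
    rw [h0] at h
    have : w = u := Option.some_inj.mp (h.symm.trans hu0)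
    subst this
    exact G.irrefl hw
  have hntu : ∀ w : V, G.Adj u w → p.idxOf w ≠ n - 1 := by
    intro w hw h0
    have h := hidx? w
    rw [h0] at h
    have : w = v := Option.some_inj.mp (h.symm.trans hv1)
    subst this
    exact hna hw
  have hntv : ∀ w : V, G.Adj v w → p.idxOf w ≠ n - 1 := by
    intro w hw h0
    have h := hidx? w
    rw [h0] at h
    have : w = v := Option.some_inj.mp (h.symm.trans hv1)
    subst this
    exact G.irrefl hw
  set S := (G.neighborFinset u).image (fun w => p.idxOf w - 1) with hSdef
  set T := (G.neighborFinset v).image (fun w => p.idxOf w) with hTdef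
  have hScard : S.card = G.degree u := by
    rw [hSdef, Finset.card_image_of_injOn, card_neighborFinset_eq_degree]
    intro w1 h1 w2 h2 heq
    rw [Finset.mem_coe, SimpleGraph.mem_neighborFinset] at h1 h2
    have e1 := hnz w1 h1
    have e2 := hnz w2 h2
    have : p.idxOf w1 = p.idxOf w2 := by simp only at heq; omega
    exact Option.some_inj.mp ((hidx? w1).symm.trans (this ▸ hidx? w2))
  have hTcard : T.card = G.degree v := by
    rw [hTdef, Finset.card_image_of_injOn, card_neighborFinset_eq_degree]
    intro w1 h1 w2 h2 heq
    simp only at heq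
    exact Option.some_inj.mp ((hidx? w1).symm.trans (heq ▸ hidx? w2))
  have hSsub : S ⊆ Finset.range (n - 1) := by
    intro i hi
    obtain ⟨w, hw, rfl⟩ := Finset.mem_image.mp hi
    rw [SimpleGraph.mem_neighborFinset] at hw
    rw [Finset.mem_range]
    have := hgeq w
    have := hntu w hw
    omega
  have hTsub : T ⊆ Finset.range (n - 1) := by
    intro i hi
    obtain ⟨w, hw, rfl⟩ := Finset.mem_image.mp hi
    rw [SimpleGraph.mem_neighborFinset] at hw
    rw [Finset.mem_range]
    have := hgeq w
    have := hntv w hw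
    omega
  have hunion : (S ∪ T).card ≤ n - 1 := by
    calc (S ∪ T).card ≤ (Finset.range (n-1)).card :=
          Finset.card_le_card (Finset.union_subset hSsub hTsub)
      _ = n - 1 := by simp
  have hint : (S ∩ T).Nonempty := by
    rw [← Finset.card_pos]
    have h1 := Finset.card_union_add_card_inter S T
    rw [hScard, hTcard] at h1
    omega
  obtain ⟨i, hiST⟩ := hint
  rw [Finset.mem_inter] at hiST
  obtain ⟨a, ha, hai⟩ := Finset.mem_image.mp hiST.1
  obtain ⟨b, hb, hbi⟩ := Finset.mem_image.mp hiST.2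
  rw [SimpleGraph.mem_neighborFinset] at ha hb
  have hia : p.idxOf a = i + 1 := by
    have := hnz a ha
    omega
  have hi1 : i + 1 < n := hia ▸ hgeq a
  have hin : i < n - 1 := by omega
  have pa : p[i+1]? = some a := hia ▸ hidx? a
  have pb : p[i]? = some b := hbi ▸ hidx? b
  -- the rotated cycle
  have hperm : (p.take (i+1) ++ (p.drop (i+1)).reverse).Perm p := by
    have h1 : (p.take (i+1) ++ (p.drop (i+1)).reverse).Perm (p.take (i+1) ++ p.drop (i+1)) :=
      List.Perm.append_left _ (List.reverse_perm _)
    rwa [List.take_append_drop] at h1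
  refine ⟨p.take (i+1) ++ (p.drop (i+1)).reverse, hperm.symm.nodup hnd, ?_, ?_, ?_⟩
  · intro x
    exact hperm.mem_iff.mpr (hmem x)
  · rw [List.Chain', List.isChain_append]
    refine ⟨hch.take _, ?_, ?_⟩
    · rw [List.isChain_reverse]
      exact (hch.drop _).imp (fun _ _ hab => hab.symm)
    · intro x hx y hy
      have hxb : (p.take (i+1)).getLast? = some b := by
        rw [List.getLast?_take]
        simp only [Nat.add_sub_cancel, if_neg (Nat.succ_ne_zero i)]
        rw [pb]
        rfl
      have hyv : ((p.drop (i+1)).reverse).head? = some v := by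
        rw [List.head?_reverse, List.getLast?_eq_getElem?, List.getElem?_drop, List.length_drop]
        have heq : (i+1) + (p.length - (i+1) - 1) = n - 1 := by omega
        rw [heq]
        exact hv1
      rw [hxb] at hx
      rw [hyv] at hy
      simp only [Option.mem_some_iff] at hx hy
      subst hx
      subst hy
      exact hb.symm
  · intro x hx y hy
    have hxg : (p.take (i+1) ++ (p.drop (i+1)).reverse).getLast? = some a := by
      rw [List.getLast?_append, List.getLast?_reverse, List.head?_eq_getElem?,
        List.getElem?_drop, Nat.add_zero, pa]
      rfl
    have hyh : (p.take (i+1) ++ (p.drop (i+1)).reverse).head? = some u := by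
      rw [List.head?_append, List.head?_take]
      simp only [if_neg (Nat.succ_ne_zero i)]
      rw [hh]
      rfl
    rw [hxg] at hx
    rw [hyh] at hy
    simp only [Option.mem_some_iff] at hx hy
    subst hx
    subst hy
    exact ha.symm

lemma ore_interior2 {q : List V} (hnd : q.Nodup) {j i : ℕ}
    {a b : V} (ha : q[j]? = some a) (hb : q[j+1]? = some b) (hij : i ≠ j)
    (hcase : (q[i]? = some a ∧ q[i+1]? = some b) ∨ (q[i]? = some b ∧ q[i+1]? = some a)) :
    False := by
  rcases hcase with ⟨h1, h2⟩ | ⟨h1, h2⟩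
  · exact hij (ore_getElem?_inj hnd h1 ha)
  · have e1 : i = j + 1 := ore_getElem?_inj hnd h1 hb
    have e2 : i + 1 = j := ore_getElem?_inj hnd h2 ha
    omega

lemma ore_case {G : SimpleGraph V} {u v : V} (huv : u ≠ v) (hna : ¬ G.Adj u v)
    (hn : 3 ≤ Fintype.card V) {c : List V}
    (hc : OreHamList (G ⊔ SimpleGraph.edge u v) c) :
    (∃ c', OreHamList G c') ∨
      ∃ d : List V, d.Nodup ∧ (∀ x : V, x ∈ d) ∧ d.Chain' G.Adj ∧
        ((d.head? = some u ∧ d.getLast? = some v) ∨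
         (d.head? = some v ∧ d.getLast? = some u)) := by
  classical
  -- rename c to q internally to avoid notation clash
  obtain ⟨hnd, hmem, hch, hwrap⟩ := hc
  set q := c with hqdef
  have hlen : q.length = Fintype.card V := ore_full_length hnd hmem
  have hn3 : 3 ≤ q.length := by omega
  have hne : q ≠ [] := by intro h; rw [h] at hn3; simp at hn3
  have hadj : ∀ a b : V, (G ⊔ SimpleGraph.edge u v).Adj a b →
      G.Adj a b ∨ (a = u ∧ b = v) ∨ (a = v ∧ b = u) := by
    intro a b hab
    rcases (SimpleGraph.sup_adj _ _ _ _).mp hab with h | h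
    · exact Or.inl h
    · exact Or.inr ((SimpleGraph.edge_adj u v a b).mp h).1
  have hch' := ore_chain'_iff.mp hch
  have hh0 : q[0]? = some (q.head hne) := by
    rw [← List.head?_eq_getElem?, List.head?_eq_head hne]
  have hlast : q[q.length - 1]? = some (q.getLast hne) := by
    rw [← List.getLast?_eq_getElem?, List.getLast?_eq_getLast hne]
  have hwrap' : (G ⊔ SimpleGraph.edge u v).Adj (q.getLast hne) (q.head hne) := by
    apply hwrap
    · rw [List.getLast?_eq_getLast hne]; rfl
    · rw [List.head?_eq_head hne]; rfl
  by_cases hwrapG : G.Adj (q.getLast hne) (q.head hne)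
  · by_cases hchG : q.Chain' G.Adj
    · left
      refine ⟨q, hnd, hmem, hchG, ?_⟩
      intro x hx y hy
      rw [List.getLast?_eq_getLast hne, Option.mem_some_iff] at hx
      rw [List.head?_eq_head hne, Option.mem_some_iff] at hy
      rw [← hx, ← hy]
      exact hwrapG
    · -- some consecutive pair is the edge u v
      right
      rw [ore_chain'_iff] at hchG
      push_neg at hchG
      obtain ⟨j, xj, yj, hxj, hyj, hnadj⟩ := hchG
      have hj1 : j + 1 < q.length := ore_lt_of_getElem? hyj
      have horient : (xj = u ∧ yj = v) ∨ (xj = v ∧ yj = u) := by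
        rcases hadj _ _ (hch' j _ _ hxj hyj) with h | h
        · exact absurd h hnadj
        · exact h
      have hdropne : q.drop (j+1) ≠ [] := by
        rw [← List.length_pos_iff, List.length_drop]
        omega
      have htakene : q.take (j+1) ≠ [] := by
        rw [← List.length_pos_iff, List.length_take]
        simp only [lt_inf_iff]
        omega
      have hperm : (q.drop (j+1) ++ q.take (j+1)).Perm q := by
        have h2 := List.perm_append_comm (l₁ := q.drop (j+1)) (l₂ := q.take (j+1))
        rwa [List.take_append_drop] at h2
      have hdh : (q.drop (j+1) ++ q.take (j+1)).head? = some yj := by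
        rw [List.head?_append, List.head?_eq_getElem?, List.getElem?_drop, Nat.add_zero, hyj]
        rfl
      have hdl : (q.drop (j+1) ++ q.take (j+1)).getLast? = some xj := by
        rw [List.getLast?_append, List.getLast?_take]
        simp only [Nat.add_sub_cancel, if_neg (Nat.succ_ne_zero j)]
        rw [hxj]
        rfl
      have hstep : ∀ i w₁ w₂, i ≠ j → q[i]? = some w₁ → q[i+1]? = some w₂ → G.Adj w₁ w₂ := by
        intro i w₁ w₂ hij h1 h2
        rcases hadj _ _ (hch' i _ _ h1 h2) with h | h | h
        · exact h
        · refine absurd rfl (fun (_ : True = True) => ?_)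
          rcases horient with ⟨e1, e2⟩ | ⟨e1, e2⟩
          · exact ore_interior2 hnd hxj hyj hij
              (Or.inl ⟨by rwa [h.1, ← e1] at h1, by rwa [h.2, ← e2] at h2⟩)
          · exact ore_interior2 hnd hxj hyj hij
              (Or.inr ⟨by rwa [h.1, ← e2] at h1, by rwa [h.2, ← e1] at h2⟩)
        · refine absurd rfl (fun (_ : True = True) => ?_)
          rcases horient with ⟨e1, e2⟩ | ⟨e1, e2⟩
          · exact ore_interior2 hnd hxj hyj hij
              (Or.inr ⟨by rwa [h.1, ← e2] at h1, by rwa [h.2, ← e1] at h2⟩)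
          · exact ore_interior2 hnd hxj hyj hij
              (Or.inl ⟨by rwa [h.1, ← e1] at h1, by rwa [h.2, ← e2] at h2⟩)
      have hdch : (q.drop (j+1) ++ q.take (j+1)).Chain' G.Adj := by
        rw [List.Chain', List.isChain_append]
        refine ⟨?_, ?_, ?_⟩
        · refine ore_chain'_iff.mpr ?_
          intro i x y hx hy
          rw [List.getElem?_drop] at hx hy
          have he : j + 1 + (i + 1) = (j + 1 + i) + 1 := by omega
          rw [he] at hy
          exact hstep (j+1+i) x y (by omega) hx hy
        · refine ore_chain'_iff.mpr ?_
          intro i x y hx hy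
          have hi1 : i + 1 < j + 1 := by
            have := ore_lt_of_getElem? hy
            rw [List.length_take] at this
            omega
          rw [List.getElem?_take_of_lt (by omega)] at hx
          rw [List.getElem?_take_of_lt hi1] at hy
          exact hstep i x y (by omega) hx hy
        · intro x hx y hy
          have hxq : (q.drop (j+1)).getLast? = some (q.getLast hne) := by
            rw [List.getLast?_eq_getElem?, List.getElem?_drop, List.length_drop]
            have he : j + 1 + (q.length - (j+1) - 1) = q.length - 1 := by omega
            rw [he]
            exact hlast
          have hyq : (q.take (j+1)).head? = some (q.head hne) := by
            rw [List.head?_take]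
            simp only [if_neg (Nat.succ_ne_zero j)]
            rw [List.head?_eq_head hne]
          rw [hxq, Option.mem_some_iff] at hx
          rw [hyq, Option.mem_some_iff] at hy
          rw [← hx, ← hy]
          exact hwrapG
      refine ⟨q.drop (j+1) ++ q.take (j+1), hperm.nodup_iff.mpr hnd,
        fun x => hperm.mem_iff.mpr (hmem x), hdch, ?_⟩
      rcases horient with ⟨e1, e2⟩ | ⟨e1, e2⟩
      · exact Or.inr ⟨by rw [hdh, e2], by rw [hdl, e1]⟩
      · exact Or.inl ⟨by rw [hdh, e2], by rw [hdl, e1]⟩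
  · -- the wrap pair is the edge u v; q itself is the path
    right
    have horient : (q.getLast hne = u ∧ q.head hne = v) ∨
        (q.getLast hne = v ∧ q.head hne = u) := by
      rcases hadj _ _ hwrap' with h | h
      · exact absurd h hwrapG
      · exact h
    have hqchain : q.Chain' G.Adj := by
      rw [ore_chain'_iff]
      intro i x y hx hy
      have hi1 : i + 1 < q.length := ore_lt_of_getElem? hy
      rcases hadj _ _ (hch' i _ _ hx hy) with h | h | h
      · exact h
      · exfalso
        rcases horient with ⟨e1, e2⟩ | ⟨e1, e2⟩
        · -- u at position length-1 but x = u at position i < length-1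
          have := ore_getElem?_inj hnd (by rwa [h.1, ← e1] at hx) hlast
          omega
        · have i1 := ore_getElem?_inj hnd (by rwa [h.1, ← e2] at hx) hh0
          have i2 := ore_getElem?_inj hnd (by rwa [h.2, ← e1] at hy) hlast
          omega
      · exfalso
        rcases horient with ⟨e1, e2⟩ | ⟨e1, e2⟩
        · have i1 := ore_getElem?_inj hnd (by rwa [h.1, ← e2] at hx) hh0
          have i2 := ore_getElem?_inj hnd (by rwa [h.2, ← e1] at hy) hlast
          omega
        · have := ore_getElem?_inj hnd (by rwa [h.1, ← e1] at hx) hlast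
          omega
    refine ⟨q, hnd, hmem, hqchain, ?_⟩
    rcases horient with ⟨e1, e2⟩ | ⟨e1, e2⟩
    · exact Or.inr ⟨by rw [List.head?_eq_head hne, e2], by rw [List.getLast?_eq_getLast hne, e1]⟩
    · exact Or.inl ⟨by rw [List.head?_eq_head hne, e2], by rw [List.getLast?_eq_getLast hne, e1]⟩

lemma ore_complete {G : SimpleGraph V} (hn : 3 ≤ Fintype.card V)
    (hcomp : ∀ u v : V, u ≠ v → G.Adj u v) : ∃ c, OreHamList G c := by
  classical
  set q := Finset.univ.toList (α := V) with hq
  have hnd : q.Nodup := Finset.nodup_toList _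
  have hmem : ∀ x : V, x ∈ q := fun x => (Finset.mem_toList).mpr (Finset.mem_univ x)
  have hlen : q.length = Fintype.card V := ore_full_length hnd hmem
  have hne : q ≠ [] := by
    intro h
    rw [h] at hlen
    simp at hlen
    omega
  refine ⟨q, hnd, hmem, ?_, ?_⟩
  · rw [ore_chain'_iff]
    intro i x y hx hy
    refine hcomp x y ?_
    intro hxy
    subst hxy
    have := ore_getElem?_inj hnd hx hy
    omega
  · intro x hx y hy
    rw [List.getLast?_eq_getLast hne, Option.mem_some_iff] at hx
    rw [List.head?_eq_head hne, Option.mem_some_iff] at hy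
    refine hcomp x y ?_
    intro hxy
    have h1 : q[q.length - 1]? = some x := by
      rw [← List.getLast?_eq_getElem?, List.getLast?_eq_getLast hne, hx]
    have h2 : q[0]? = some x := by
      rw [← List.head?_eq_getElem?, List.head?_eq_head hne, hy, hxy]
    have := ore_getElem?_inj hnd h1 h2
    omega

lemma ore_aux : ∀ (k : ℕ) (G : SimpleGraph V) [DecidableRel G.Adj],
    (Finset.univ.filter (fun p : V × V => p.1 ≠ p.2 ∧ ¬ G.Adj p.1 p.2)).card ≤ k →
    3 ≤ Fintype.card V →
    (∀ u v : V, u ≠ v → ¬ G.Adj u v → Fintype.card V ≤ G.degree u + G.degree v) →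
    ∃ c, OreHamList G c := by
  intro k
  induction k with
  | zero =>
    intro G _ hcard hn hσ
    refine ore_complete hn ?_
    intro a b hab
    by_contra hnadj
    have : (a, b) ∈ Finset.univ.filter (fun p : V × V => p.1 ≠ p.2 ∧ ¬ G.Adj p.1 p.2) := by
      simp [hab, hnadj]
    have := Finset.card_pos.mpr ⟨_, this⟩
    omega
  | succ k ih =>
    intro G _ hcard hn hσ
    by_cases hcomp : ∀ a b : V, a ≠ b → G.Adj a b
    · exact ore_complete hn hcomp
    · push_neg at hcomp
      obtain ⟨u, v, huv, hna⟩ := hcomp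
      classical
      set G' := G ⊔ SimpleGraph.edge u v with hG'
      haveI : DecidableRel G'.Adj := Classical.decRel _
      have hle : ∀ a b : V, G.Adj a b → G'.Adj a b := by
        intro a b h
        rw [hG', SimpleGraph.sup_adj]
        exact Or.inl h
      have hG'uv : G'.Adj u v := by
        rw [hG', SimpleGraph.sup_adj, SimpleGraph.edge_adj]
        exact Or.inr ⟨Or.inl ⟨rfl, rfl⟩, huv⟩
      have hdegle : ∀ w : V, G.degree w ≤ G'.degree w := by
        intro w
        apply Finset.card_le_card
        intro z hz
        rw [SimpleGraph.mem_neighborFinset] at hz ⊢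
        exact hle _ _ hz
      have hsub : (Finset.univ.filter (fun p : V × V => p.1 ≠ p.2 ∧ ¬ G'.Adj p.1 p.2)) ⊂
          (Finset.univ.filter (fun p : V × V => p.1 ≠ p.2 ∧ ¬ G.Adj p.1 p.2)) := by
        constructor
        · intro p hp
          simp only [Finset.mem_filter, Finset.mem_univ, true_and] at hp ⊢
          exact ⟨hp.1, fun h => hp.2 (hle _ _ h)⟩
        · intro hsub'
          have : (u, v) ∈ Finset.univ.filter
              (fun p : V × V => p.1 ≠ p.2 ∧ ¬ G.Adj p.1 p.2) := by
            simp [huv, hna]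
          have := hsub' this
          simp only [Finset.mem_filter, Finset.mem_univ, true_and] at this
          exact this.2 hG'uv
      have hcard' : (Finset.univ.filter (fun p : V × V => p.1 ≠ p.2 ∧ ¬ G'.Adj p.1 p.2)).card ≤ k := by
        have := Finset.card_lt_card hsub
        omega
      have hσ' : ∀ a b : V, a ≠ b → ¬ G'.Adj a b →
          Fintype.card V ≤ G'.degree a + G'.degree b := by
        intro a b hab hnadj
        have hnG : ¬ G.Adj a b := fun h => hnadj (hle _ _ h)
        calc Fintype.card V ≤ G.degree a + G.degree b := hσ a b hab hnG
          _ ≤ G'.degree a + G'.degree b := Nat.add_le_add (hdegle a) (hdegle b)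
      obtain ⟨c, hc⟩ := ih G' hcard' hn hσ'
      rcases ore_case huv hna hn hc with ⟨c', hc'⟩ | ⟨d, hd1, hd2, hd3, hd4⟩
      · exact ⟨c', hc'⟩
      rcases hd4 with ⟨h1, h2⟩ | ⟨h1, h2⟩
      · exact ore_rotation huv hna (hσ u v huv hna) hn d hd1 hd2 hd3 h1 h2
      · exact ore_rotation (Ne.symm huv) (fun h => hna h.symm)
          (by rw [Nat.add_comm]; exact hσ u v huv hna) hn d hd1 hd2 hd3 h1 h2

end OreAux

/-- Ore's theorem: if `G` is a graph of order `n ≥ 3` such that any two non-adjacent vertices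
have degree sum at least `n`, then `G` is Hamiltonian. -/
theorem ore_hamiltonian {V : Type} [Fintype V] [DecidableEq V]
    (G : SimpleGraph V) [DecidableRel G.Adj]
    (hn : 3 ≤ Fintype.card V)
    (hσ : ∀ u v : V, u ≠ v → ¬ G.Adj u v → Fintype.card V ≤ G.degree u + G.degree v) :
    G.IsHamiltonian := by
  obtain ⟨c, hc⟩ := ore_aux
    (Finset.univ.filter (fun p : V × V => p.1 ≠ p.2 ∧ ¬ G.Adj p.1 p.2)).card
    G le_rfl hn hσ
  exact oreHamList_isHamiltonian hn hc
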